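/- Under the density assumptions, the ratio r = (∑_{ℓ prime, ℓ ≥ 3} d_ℓ)/(∑_{ℓ ≥ 3} d_ℓ) satisfies r ≤ [ (3/2)A·(1/15 + 1/95 + (49/41)(P(3) - 1/8 - 1/27 - 1/125) + P(2) - 1/4) ] / (1 - (7/4)A). -/

import Mathlib

noncomputable def Q (ℓ : ℕ) : ℝ :=
  (1 / (ℓ : ℝ) ^ 2) * ∏ q ∈ ℓ.primeFactors, (((q : ℝ) ^ 2 - 1) / ((q : ℝ) ^ 2 - q - 1))

private lemma prime_ge7 {n : ℕ} (hp : n.Prime) (h2 : n ≠ 2) (h3 : n ≠ 3) (h5 : n ≠ 5) :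
    7 ≤ n := by
  by_contra h
  push_neg at h
  interval_cases n <;> first
    | exact (h2 rfl).elim | exact (h3 rfl).elim | exact (h5 rfl).elim
    | exact absurd hp (by decide)

private lemma split35 (f : ℕ → ℝ) (hf : Summable f) :
    ∑' n, Set.indicator {n : ℕ | n.Prime ∧ 3 ≤ n} f n
      = f 3 + (f 5 + ∑' n, Set.indicator {n : ℕ | n.Prime ∧ 7 ≤ n} f n) := by
  have key : Set.indicator {n : ℕ | n.Prime ∧ 3 ≤ n} f
      = fun n => (if n = 3 then f 3 else 0) + ((if n = 5 then f 5 else 0)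
          + Set.indicator {n : ℕ | n.Prime ∧ 7 ≤ n} f n) := by
    funext n
    simp only [Set.indicator_apply, Set.mem_setOf_eq]
    by_cases h3 : n = 3
    · subst h3; norm_num
    by_cases h5 : n = 5
    · subst h5; norm_num
    by_cases hp : n.Prime
    · by_cases h2 : n = 2
      · subst h2; norm_num
      · have h7 : 7 ≤ n := prime_ge7 hp h2 h3 h5
        simp [hp, h3, h5, h7, show 3 ≤ n by omega]
    · simp [hp, h3, h5]
  rw [key]
  rw [Summable.tsum_add ((hasSum_ite_eq 3 (f 3)).summable)
      (((hasSum_ite_eq 5 (f 5)).summable).add (hf.indicator _)),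
    Summable.tsum_add ((hasSum_ite_eq 5 (f 5)).summable) (hf.indicator _),
    tsum_ite_eq, tsum_ite_eq]

private lemma splitP (f : ℕ → ℝ) (hf : Summable f) :
    ∑' n, Set.indicator {n : ℕ | n.Prime} f n
      = f 2 + (f 3 + (f 5 + ∑' n, Set.indicator {n : ℕ | n.Prime ∧ 7 ≤ n} f n)) := by
  have key : Set.indicator {n : ℕ | n.Prime} f
      = fun n => (if n = 2 then f 2 else 0)
          + Set.indicator {n : ℕ | n.Prime ∧ 3 ≤ n} f n := by
    funext n
    simp only [Set.indicator_apply, Set.mem_setOf_eq]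
    by_cases h2 : n = 2
    · subst h2; norm_num
    by_cases hp : n.Prime
    · have h3 : 3 ≤ n := by have := hp.two_le; omega
      simp [hp, h2, h3]
    · simp [hp, h2]
  rw [key, Summable.tsum_add ((hasSum_ite_eq 2 (f 2)).summable) (hf.indicator _), tsum_ite_eq,
    split35 f hf]

private def e3 : ℕ ≃ {n : ℕ // 3 ≤ n} where
  toFun k := ⟨k + 3, by omega⟩
  invFun n := n.1 - 3
  left_inv k := by simp
  right_inv n := Subtype.ext (by have := n.2; simp; omega)

private lemma Qprime {p : ℕ} (hp : p.Prime) :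
    Q p = (1 / (p : ℝ) ^ 2) * (((p : ℝ) ^ 2 - 1) / ((p : ℝ) ^ 2 - p - 1)) := by
  rw [Q, hp.primeFactors, Finset.prod_singleton]

theorem stmt_17 (A : ℝ) (hA : 0 < A) (hA' : 0 < 1 - (7 / 4) * A) (d : ℕ → ℝ)
    (hodd : ∀ ℓ : ℕ, 1 ≤ ℓ → Odd ℓ → d ℓ = (3 / 2) * A * Q ℓ)
    (h2mod4 : ∀ ℓ : ℕ, ℓ % 4 = 2 → d ℓ = (1 / 3) * A * Q ℓ)
    (h4 : ∀ ℓ : ℕ, 4 ∣ ℓ → d ℓ = A * Q ℓ)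
    (hsummable : Summable (fun ℓ : {n : ℕ // 1 ≤ n} => d ℓ.1))
    (hsum : (∑' ℓ : {n : ℕ // 1 ≤ n}, d ℓ.1) = 1) :
    (∑' ℓ : {n : ℕ // n.Prime ∧ 3 ≤ n}, d ℓ.1) / (∑' ℓ : {n : ℕ // 3 ≤ n}, d ℓ.1)
      ≤ ((3 / 2) * A * (1 / 15 + 1 / 95
          + (49 / 41) * ((∑' p : {p : ℕ // p.Prime}, 1 / (p.1 : ℝ) ^ 3)
              - 1 / 8 - 1 / 27 - 1 / 125)
          + (∑' p : {p : ℕ // p.Prime}, 1 / (p.1 : ℝ) ^ 2) - 1 / 4))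
        / (1 - (7 / 4) * A) := by
  classical
  set u2 : ℕ → ℝ := fun n => 1 / (n : ℝ) ^ 2 with hu2def
  set u3 : ℕ → ℝ := fun n => 1 / (n : ℝ) ^ 3 with hu3def
  have hu2 : Summable u2 := Real.summable_one_div_nat_pow.mpr one_lt_two
  have hu3 : Summable u3 := Real.summable_one_div_nat_pow.mpr (by norm_num)
  have hd0 : d 0 = 0 := by
    rw [h4 0 (dvd_zero 4)]
    simp [Q]
  have hind : Set.indicator {n : ℕ | 1 ≤ n} d = d := by
    funext n
    rcases Nat.eq_zero_or_pos n with h | h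
    · subst h; simp [hd0]
    · exact Set.indicator_of_mem h d
  have hSd : Summable d := by
    rw [← hind]
    exact summable_subtype_iff_indicator.mp hsummable
  have hTd : ∑' n, d n = 1 := by
    rw [← hind, ← tsum_subtype]
    exact hsum
  -- values at small points
  have hQ1 : Q 1 = 1 := by simp [Q]
  have hd1 : d 1 = 3 / 2 * A := by
    rw [hodd 1 le_rfl odd_one, hQ1]; ring
  have hd2 : d 2 = A / 4 := by
    rw [h2mod4 2 rfl, Qprime Nat.prime_two]; norm_num; ring
  have hd3 : d 3 = 3 / 2 * A * (8 / 45) := by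
    rw [hodd 3 (by norm_num) ⟨1, rfl⟩, Qprime Nat.prime_three]; norm_num
  have hd5 : d 5 = 3 / 2 * A * (24 / 475) := by
    rw [hodd 5 (by norm_num) ⟨2, rfl⟩, Qprime (by norm_num : Nat.Prime 5)]; norm_num
  -- denominator
  have hden : (∑' ℓ : {n : ℕ // 3 ≤ n}, d ℓ.1) = 1 - 7 / 4 * A := by
    have h1 : (∑' ℓ : {n : ℕ // 3 ≤ n}, d ℓ.1) = ∑' k : ℕ, d (k + 3) :=
      (Equiv.tsum_eq e3 (fun ℓ : {n : ℕ // 3 ≤ n} => d ℓ.1)).symm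
    have h2 := Summable.sum_add_tsum_nat_add 3 hSd
    rw [hTd] at h2
    have h3 : ∑ i ∈ Finset.range 3, d i = d 0 + d 1 + d 2 := by
      simp [Finset.sum_range_succ]
    rw [h3, hd0, hd1, hd2] at h2
    rw [h1]; linarith
  -- numerator
  have hnum : (∑' ℓ : {n : ℕ // n.Prime ∧ 3 ≤ n}, d ℓ.1)
      = d 3 + (d 5 + ∑' n, Set.indicator {n : ℕ | n.Prime ∧ 7 ≤ n} d n) := by
    rw [show (∑' ℓ : {n : ℕ // n.Prime ∧ 3 ≤ n}, d ℓ.1)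
        = ∑' n, Set.indicator {n : ℕ | n.Prime ∧ 3 ≤ n} d n from tsum_subtype _ _]
    exact split35 d hSd
  set g : ℕ → ℝ := fun n => 3 / 2 * A * (u2 n + 49 / 41 * u3 n) with hgdef
  have hg : Summable g := (hu2.add (hu3.mul_left _)).mul_left _
  have hbound : ∑' n, Set.indicator {n : ℕ | n.Prime ∧ 7 ≤ n} d n
      ≤ ∑' n, Set.indicator {n : ℕ | n.Prime ∧ 7 ≤ n} g n := by
    refine Summable.tsum_le_tsum (fun n => ?_) (hSd.indicator _) (hg.indicator _)
    by_cases hn : n ∈ {n : ℕ | n.Prime ∧ 7 ≤ n}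
    · rw [Set.indicator_of_mem hn, Set.indicator_of_mem hn]
      obtain ⟨hp, h7⟩ := hn
      have hx : (7 : ℝ) ≤ (n : ℝ) := by exact_mod_cast h7
      have hx0 : (0 : ℝ) < (n : ℝ) := by linarith
      have hx2 : (0 : ℝ) < (n : ℝ) ^ 2 - n - 1 := by nlinarith
      rw [hodd n (by omega) (hp.odd_of_ne_two (by omega)), Qprime hp]
      have e1 : (1 / (n : ℝ) ^ 2) * (((n : ℝ) ^ 2 - 1) / ((n : ℝ) ^ 2 - n - 1))
          = 1 / (n : ℝ) ^ 2 + 1 / ((n : ℝ) * ((n : ℝ) ^ 2 - n - 1)) := by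
        rw [div_add_div _ _ (by positivity) (mul_ne_zero hx0.ne' hx2.ne'), div_mul_div_comm,
          div_eq_div_iff (mul_ne_zero (by positivity) hx2.ne')
            (mul_ne_zero (by positivity) (mul_ne_zero hx0.ne' hx2.ne'))]
        ring
      have e2 : 1 / ((n : ℝ) * ((n : ℝ) ^ 2 - n - 1)) ≤ 49 / 41 * (1 / (n : ℝ) ^ 3) := by
        rw [show (49 : ℝ) / 41 * (1 / (n : ℝ) ^ 3) = 49 / (41 * (n : ℝ) ^ 3) by ring,
          div_le_div_iff₀ (by positivity) (by positivity)]
        nlinarith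
      have hkey : (1 / (n : ℝ) ^ 2) * (((n : ℝ) ^ 2 - 1) / ((n : ℝ) ^ 2 - n - 1))
          ≤ u2 n + 49 / 41 * u3 n := by
        rw [e1, hu2def, hu3def]; dsimp only; linarith
      have hc : (0 : ℝ) ≤ 3 / 2 * A := by linarith
      calc 3 / 2 * A * ((1 / (n : ℝ) ^ 2) * (((n : ℝ) ^ 2 - 1) / ((n : ℝ) ^ 2 - n - 1)))
          ≤ 3 / 2 * A * (u2 n + 49 / 41 * u3 n) := mul_le_mul_of_nonneg_left hkey hc
        _ = g n := rfl
    · rw [Set.indicator_of_notMem hn, Set.indicator_of_notMem hn]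
  have hgsplit : ∑' n, Set.indicator {n : ℕ | n.Prime ∧ 7 ≤ n} g n
      = 3 / 2 * A * ((∑' n, Set.indicator {n : ℕ | n.Prime ∧ 7 ≤ n} u2 n)
          + 49 / 41 * ∑' n, Set.indicator {n : ℕ | n.Prime ∧ 7 ≤ n} u3 n) := by
    have keq : Set.indicator {n : ℕ | n.Prime ∧ 7 ≤ n} g
        = fun n => 3 / 2 * A * (Set.indicator {n : ℕ | n.Prime ∧ 7 ≤ n} u2 n
            + 49 / 41 * Set.indicator {n : ℕ | n.Prime ∧ 7 ≤ n} u3 n) := by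
      funext n
      by_cases hn : n ∈ {n : ℕ | n.Prime ∧ 7 ≤ n} <;>
        simp [Set.indicator_apply, hn, hgdef]
    rw [keq, tsum_mul_left,
      Summable.tsum_add (hu2.indicator _) ((hu3.indicator _).mul_left _), tsum_mul_left]
  -- the prime zeta sums
  have hP2 : (∑' p : {p : ℕ // p.Prime}, 1 / (p.1 : ℝ) ^ 2)
      = 1 / 4 + (1 / 9 + (1 / 25 + ∑' n, Set.indicator {n : ℕ | n.Prime ∧ 7 ≤ n} u2 n)) := by
    have h1 : (∑' p : {p : ℕ // p.Prime}, 1 / (p.1 : ℝ) ^ 2)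
        = ∑' n, Set.indicator {n : ℕ | n.Prime} u2 n := tsum_subtype {n : ℕ | n.Prime} u2
    rw [h1, splitP u2 hu2]; norm_num [hu2def]
  have hP3 : (∑' p : {p : ℕ // p.Prime}, 1 / (p.1 : ℝ) ^ 3)
      = 1 / 8 + (1 / 27 + (1 / 125 + ∑' n, Set.indicator {n : ℕ | n.Prime ∧ 7 ≤ n} u3 n)) := by
    have h1 : (∑' p : {p : ℕ // p.Prime}, 1 / (p.1 : ℝ) ^ 3)
        = ∑' n, Set.indicator {n : ℕ | n.Prime} u3 n := tsum_subtype {n : ℕ | n.Prime} u3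
    rw [h1, splitP u3 hu3]; norm_num [hu3def]
  -- assemble
  rw [hden, hnum, hP2, hP3]
  rw [div_le_div_iff_of_pos_right hA']
  rw [hd3, hd5]
  nlinarith [hbound, hgsplit]
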